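/- arXiv:2107.08877 — 3 statements merged into one kernel-verified Lean document; each statement's English description precedes it below -/
import Mathlib

section
/- Let γ, β ∈ Y and let N be a G-invariant subgroup of V (i.e. N = N^G ≤ V). If N·H_{γ,i} = N·H_{β,i} for all i ≥ 1, then J_γ + (N−1)ℤG = J_β + (N−1)ℤG as right ideals of ℤG. -/
noncomputable section

/-- Parameter sequences: `Y = {0,1}^ℕ`; the paper's `λ(n)` (for `n ≥ 1`) is `l (n-1) : Bool`,
with `0 ↔ false` and `1 ↔ true`. -/
abbrev Y : Type := ℕ → Bool

/-- The 𝔽₂-vector space `V` with basis `{e i, f i : i ∈ ℤ}` (basis indexed by `ℤ × Bool`). -/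
abbrev Vsp : Type := (ℤ × Bool) →₀ ZMod 2

/-- The basis vector `e i`. -/
def e (i : ℤ) : Vsp := Finsupp.single (i, false) 1

/-- The basis vector `f i`. -/
def f (i : ℤ) : Vsp := Finsupp.single (i, true) 1

/-- The permutation of the basis swapping `e 0` and `f 0`. -/
def aPerm : Equiv.Perm (ℤ × Bool) := Equiv.swap ((0 : ℤ), false) ((0 : ℤ), true)

/-- The shift permutation of the basis, `e i ↦ e (i+1)`, `f i ↦ f (i+1)`. -/
def tPerm : Equiv.Perm (ℤ × Bool) := (Equiv.addRight (1 : ℤ)).prodCongr (Equiv.refl Bool)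

/-- The automorphism of `V` induced by a permutation of the basis, viewed as an automorphism
of the (multiplicatively written) group `V`. -/
def permAut (σ : Equiv.Perm (ℤ × Bool)) : MulAut (Multiplicative Vsp) :=
  AddEquiv.toMultiplicative (Finsupp.domCongr σ : Vsp ≃+ Vsp)

/-- The automorphism `a` of `V`. -/
def aAut : MulAut (Multiplicative Vsp) := permAut aPerm

/-- The automorphism `t` of `V`. -/
def tAut : MulAut (Multiplicative Vsp) := permAut tPerm

/-- The subgroup `⟨a, t⟩ ≤ GL(V)`. -/
def Asub : Subgroup (MulAut (Multiplicative Vsp)) := Subgroup.closure {aAut, tAut}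

/-- The group `G = V ⋊ ⟨a, t⟩ ≅ C₂ ≀ C₂ ≀ C_∞`. -/
abbrev G : Type := Multiplicative Vsp ⋊[Asub.subtype] ↥Asub

/-- The inclusion `V → G`. -/
def ofV (v : Vsp) : G := SemidirectProduct.inl (Multiplicative.ofAdd v)

/-- A subgroup of `V`, viewed as a subgroup of `G`. -/
def subgroupOfV (H : AddSubgroup Vsp) : Subgroup G :=
  Subgroup.map SemidirectProduct.inl (AddSubgroup.toSubgroup H)

/-- The sequence `c_λ`: for `n ≥ 1`, `c (2n-1) = e n`, `c (2n) = f n` if `λ(n) = 0`, and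
`c (2n-1) = f n`, `c (2n) = e n` if `λ(n) = 1`. -/
def cseq (l : Y) (m : ℕ) : Vsp :=
  if (m % 2 = 1) ↔ (l ((m + 1) / 2 - 1) = false) then e ((m + 1) / 2) else f ((m + 1) / 2)

/-- The subgroup `H_{λ,i} = ⟨e 0, f 0, e (-1), f (-1), …, e (-i), f (-i), c 1, …, c i⟩ ≤ V`. -/
def Hsub (l : Y) (i : ℕ) : AddSubgroup Vsp :=
  AddSubgroup.closure
    ((fun j : ℕ => e (-(j : ℤ))) '' Set.Icc 0 i ∪ (fun j : ℕ => f (-(j : ℤ))) '' Set.Icc 0 i ∪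
      cseq l '' Set.Icc 1 i)

/-- The integral group ring `ℤG`. -/
abbrev ZG : Type := MonoidAlgebra ℤ G

/-- The element of `ℤG` corresponding to `v ∈ V ≤ G`. -/
def zOfV (v : Vsp) : ZG := MonoidAlgebra.of ℤ G (ofV v)

/-- The (left) ideal of the group ring `kG` generated by `{g - 1 : g ∈ S}`; this is the
mirror image of the right ideal `(S - 1)kG` of the paper (all modules are taken as left
modules here, mirroring the right modules of the paper). -/
def grpIdeal (k : Type) [CommRing k] (S : Set G) : Ideal (MonoidAlgebra k G) :=
  Ideal.span ((fun g : G => (MonoidAlgebra.of k G g : MonoidAlgebra k G) - 1) '' S)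

/-- The permutation module `U_{λ,i} = 𝔽_{p i}G/(H_{λ,i} - 1)𝔽_{p i}G`. -/
def Ui (p : ℕ → ℕ) (l : Y) (i : ℕ) : Type :=
  MonoidAlgebra (ZMod (p i)) G ⧸ grpIdeal (ZMod (p i)) (subgroupOfV (Hsub l i) : Set G)

instance (p : ℕ → ℕ) (l : Y) (i : ℕ) : AddCommGroup (Ui p l i) :=
  inferInstanceAs (AddCommGroup
    (MonoidAlgebra (ZMod (p i)) G ⧸ grpIdeal (ZMod (p i)) (subgroupOfV (Hsub l i) : Set G)))

instance (p : ℕ → ℕ) (l : Y) (i : ℕ) : Module (MonoidAlgebra (ZMod (p i)) G) (Ui p l i) :=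
  inferInstanceAs (Module (MonoidAlgebra (ZMod (p i)) G)
    (MonoidAlgebra (ZMod (p i)) G ⧸ grpIdeal (ZMod (p i)) (subgroupOfV (Hsub l i) : Set G)))

/-- The canonical ring homomorphism `ℤG → 𝔽_qG`, reducing coefficients mod `q`. -/
def coeffHom (q : ℕ) : ZG →+* MonoidAlgebra (ZMod q) G :=
  ((MonoidAlgebra.lift ℤ (MonoidAlgebra (ZMod q) G) G) (MonoidAlgebra.of (ZMod q) G)).toRingHom

/-- `U_{λ,i}` as a `ℤG`-module. -/
instance (p : ℕ → ℕ) (l : Y) (i : ℕ) : Module ZG (Ui p l i) :=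
  Module.compHom _ (coeffHom (p i))

/-- The module generator `u_{λ,i} = 1 + (H_{λ,i} - 1)𝔽_{p i}G` of `U_{λ,i}`. -/
def ui (p : ℕ → ℕ) (l : Y) (i : ℕ) : Ui p l i :=
  (Submodule.Quotient.mk 1 :
    MonoidAlgebra (ZMod (p i)) G ⧸ grpIdeal (ZMod (p i)) (subgroupOfV (Hsub l i) : Set G))

/-- The index set `{1, 2, 3, …}` for the sequences `(p_i)` and `(H_{λ,i})`. -/
abbrev Idx : Type := {i : ℕ // 1 ≤ i}

/-- The element `u_λ = (u_{λ,1}, u_{λ,2}, …) ∈ ∏_{i ≥ 1} U_{λ,i}`. -/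
def ul (p : ℕ → ℕ) (l : Y) : ∀ i : Idx, Ui p l i.1 := fun i => ui p l i.1

/-- The module `M_λ`: the cyclic `ℤG`-submodule of `∏_{i ≥ 1} U_{λ,i}` generated by `u_λ`. -/
def Ml (p : ℕ → ℕ) (l : Y) : Submodule ZG (∀ i : Idx, Ui p l i.1) :=
  Submodule.span ZG {ul p l}

/-- The annihilator ideal `J_λ = ann_{ℤG}(u_λ)`. -/
def Jl (p : ℕ → ℕ) (l : Y) : Ideal ZG :=
  LinearMap.ker (LinearMap.toSpanSingleton ZG (∀ i : Idx, Ui p l i.1) (ul p l))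

/-- The submodule `M(N-1)` of `M = M_λ`, spanned by the elements `(x-1)m`, `m ∈ M`, `x ∈ N`. -/
def MlAug (p : ℕ → ℕ) (l : Y) (N : AddSubgroup Vsp) : Submodule ZG ↥(Ml p l) :=
  Submodule.span ZG {z : ↥(Ml p l) | ∃ x ∈ N, ∃ m : ↥(Ml p l), z = (zOfV x - 1) • m}

/-- The ideal `(N - 1)ℤG` for a subgroup `N ≤ V`. -/
def augV (N : AddSubgroup Vsp) : Ideal ZG :=
  Ideal.span ((fun v : Vsp => zOfV v - 1) '' (N : Set Vsp))



open scoped Classical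

namespace Stmt5Aux

lemma ofV_add (v w : Vsp) : ofV (v + w) = ofV v * ofV w := by
  unfold ofV; rw [← map_mul]; rfl

lemma ofV_zero : ofV 0 = 1 := by unfold ofV; rfl

lemma ofV_inv (v : Vsp) : (ofV v)⁻¹ = ofV (-v) := by
  unfold ofV; rw [← map_inv]; rfl

lemma ofV_injective : Function.Injective ofV := by
  intro a b hab
  exact Multiplicative.ofAdd.injective (SemidirectProduct.inl_injective hab)

lemma ofV_mem_subgroupOfV {X : AddSubgroup Vsp} {v : Vsp} :
    ofV v ∈ subgroupOfV X ↔ v ∈ X := by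
  constructor
  · rintro hx
    rw [subgroupOfV, Subgroup.mem_map] at hx
    obtain ⟨y, hy, hxy⟩ := hx
    have : y = Multiplicative.ofAdd v := SemidirectProduct.inl_injective hxy
    subst this; exact hy
  · intro hv
    exact Subgroup.mem_map.2 ⟨Multiplicative.ofAdd v, hv, rfl⟩

lemma mem_subgroupOfV {X : AddSubgroup Vsp} {x : G} :
    x ∈ subgroupOfV X ↔ ∃ v ∈ X, ofV v = x := by
  rw [subgroupOfV, Subgroup.mem_map]
  constructor
  · rintro ⟨y, hy, rfl⟩; exact ⟨y.toAdd, hy, rfl⟩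
  · rintro ⟨v, hv, rfl⟩; exact ⟨Multiplicative.ofAdd v, hv, rfl⟩

lemma subgroupOfV_mono {X Y : AddSubgroup Vsp} (hXY : X ≤ Y) :
    subgroupOfV X ≤ subgroupOfV Y := by
  intro x hx
  rw [mem_subgroupOfV] at hx ⊢
  obtain ⟨v, hv, rfl⟩ := hx
  exact ⟨v, hXY hv, rfl⟩

end Stmt5Aux


namespace Stmt5Aux

variable {k : Type} [CommRing k]

/-- Sum of the coefficients of `z` over the left coset `g • H'`. -/
def S (H' : Subgroup G) (g : G) : MonoidAlgebra k G →+ k :=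
  AddMonoidHom.mk' (fun z => z.coeff.sum fun x c => if g⁻¹ * x ∈ H' then c else 0) (by
    intro z z'
    rw [MonoidAlgebra.coeff_add]
    apply Finsupp.sum_add_index' <;> intros <;> split <;> simp)

lemma S_apply (H' : Subgroup G) (g : G) (z : MonoidAlgebra k G) :
    S H' g z = z.coeff.sum fun x c => if g⁻¹ * x ∈ H' then c else 0 := rfl

lemma S_single (H' : Subgroup G) (g x : G) (c : k) :
    S H' g (MonoidAlgebra.single x c) = if g⁻¹ * x ∈ H' then c else 0 := by
  rw [S_apply, MonoidAlgebra.coeff_single]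
  exact Finsupp.sum_single_index (by split <;> rfl)

lemma S_mul_single (H' : Subgroup G) (g g₀ : G) (c : k) (m : MonoidAlgebra k G) :
    S H' g (MonoidAlgebra.single g₀ c * m) = c * S H' (g₀⁻¹ * g) m := by
  induction m using MonoidAlgebra.induction_linear with
  | zero => simp
  | add a b ha hb => rw [mul_add, map_add, ha, hb, map_add, mul_add]
  | single x b =>
    rw [MonoidAlgebra.single_mul_single, S_single, S_single]
    have : g⁻¹ * (g₀ * x) = (g₀⁻¹ * g)⁻¹ * x := by group
    rw [this]
    split <;> simp [mul_assoc]

lemma S_basepoint {H' : Subgroup G} {g g' : G} (h : g⁻¹ * g' ∈ H')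
    (z : MonoidAlgebra k G) : S H' g z = S H' g' z := by
  rw [S_apply, S_apply]
  apply Finsupp.sum_congr
  intro x _
  have hiff : g⁻¹ * x ∈ H' ↔ g'⁻¹ * x ∈ H' := by
    constructor
    · intro hx
      have : g'⁻¹ * x = (g⁻¹ * g')⁻¹ * (g⁻¹ * x) := by group
      rw [this]; exact mul_mem (inv_mem h) hx
    · intro hx
      have : g⁻¹ * x = (g⁻¹ * g') * (g'⁻¹ * x) := by group
      rw [this]; exact mul_mem h hx
  simp only [hiff]

lemma S_eq_zero_of_disjoint {H' : Subgroup G} {g : G} {z : MonoidAlgebra k G}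
    (h : ∀ x ∈ z.coeff.support, g⁻¹ * x ∉ H') : S H' g z = 0 := by
  rw [S_apply, Finsupp.sum]
  apply Finset.sum_eq_zero
  intro x hx
  rw [if_neg (h x hx)]

lemma S_mul_eq_zero {H' : Subgroup G} {m : MonoidAlgebra k G}
    (hm : ∀ g, S H' g m = 0) (r : MonoidAlgebra k G) :
    ∀ g, S H' g (r * m) = 0 := by
  intro g
  have hr : r * m = r.coeff.sum fun a b => MonoidAlgebra.single a b * m := by
    conv_lhs => rw [← MonoidAlgebra.sum_coeff_single r]
    rw [Finsupp.sum_mul]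
  rw [hr, map_finsuppSum, Finsupp.sum]
  apply Finset.sum_eq_zero
  intro a _
  rw [S_mul_single, hm, mul_zero]

lemma S_eq_zero_of_mem_grpIdeal {H' : Subgroup G} {z : MonoidAlgebra k G}
    (hz : z ∈ grpIdeal k (H' : Set G)) : ∀ g, S H' g z = 0 := by
  refine Submodule.span_induction ?_ ?_ ?_ ?_ hz
  · rintro x ⟨y, hy, rfl⟩ g
    show S H' g ((MonoidAlgebra.of k G) y - 1) = 0
    rw [MonoidAlgebra.of_apply, MonoidAlgebra.one_def, map_sub, S_single, S_single]
    have hiff : g⁻¹ * y ∈ H' ↔ g⁻¹ * 1 ∈ H' := by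
      rw [mul_one]
      constructor
      · intro hx
        have : g⁻¹ = (g⁻¹ * y) * y⁻¹ := by group
        rw [this]; exact mul_mem hx (inv_mem hy)
      · intro hx
        exact mul_mem hx hy
    rw [if_congr hiff rfl rfl]
    ring
  · intro g; simp
  · intro x y _ _ hx hy g; rw [map_add, hx, hy, add_zero]
  · intro a x _ hx g
    rw [smul_eq_mul]
    exact S_mul_eq_zero hx a g

lemma mem_grpIdeal_of_S_aux {H' : Subgroup G} :
    ∀ (n : ℕ) (z : MonoidAlgebra k G), z.coeff.support.card ≤ n →
      (∀ g, S H' g z = 0) → z ∈ grpIdeal k (H' : Set G) := by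
  intro n
  induction n with
  | zero =>
    intro z hcard _
    have : z.coeff.support = ∅ := Finset.card_eq_zero.1 (Nat.le_zero.1 hcard)
    rw [Finsupp.support_eq_empty, MonoidAlgebra.coeff_eq_zero] at this
    rw [this]
    exact zero_mem _
  | succ n ih =>
    intro z hcard hS
    by_cases hz0 : z = 0
    · rw [hz0]; exact zero_mem _
    obtain ⟨g, hg⟩ := Finsupp.support_nonempty_iff.2 (mt MonoidAlgebra.coeff_eq_zero.1 hz0)
    have hzg : z.coeff g ≠ 0 := Finsupp.mem_support_iff.1 hg
    have hex : ∃ g' ∈ z.coeff.support, g' ≠ g ∧ g⁻¹ * g' ∈ H' := by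
      by_contra hcon
      push_neg at hcon
      have hSz : S H' g z = z.coeff g := by
        rw [S_apply, Finsupp.sum]
        rw [Finset.sum_eq_single_of_mem g hg]
        · rw [if_pos (by rw [inv_mul_cancel]; exact one_mem _)]
        · intro x hx hne
          rw [if_neg (hcon x hx hne)]
      rw [hS g] at hSz
      exact hzg hSz.symm
    obtain ⟨g', hg'su, hne, hmem⟩ := hex
    set q : MonoidAlgebra k G :=
      MonoidAlgebra.single g (z.coeff g) - MonoidAlgebra.single g' (z.coeff g) with hq
    have hqI : q ∈ grpIdeal k (H' : Set G) := by
      have hfactor : q = MonoidAlgebra.single g' (z.coeff g) *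
          (MonoidAlgebra.single (g'⁻¹ * g) (1 : k) - 1) := by
        rw [mul_sub, MonoidAlgebra.single_mul_single, mul_one, mul_inv_cancel_left, mul_one]
      rw [hfactor]
      apply Ideal.mul_mem_left
      apply Ideal.subset_span
      refine ⟨g'⁻¹ * g, ?_, by simp [MonoidAlgebra.of_apply, MonoidAlgebra.one_def]⟩
      have : g'⁻¹ * g = (g⁻¹ * g')⁻¹ := by group
      rw [this]
      exact inv_mem hmem
    set z' : MonoidAlgebra k G := z - q with hz'
    have hsupp : z'.coeff.support ⊆ z.coeff.support.erase g := by
      intro a ha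
      rw [Finsupp.mem_support_iff] at ha
      rw [Finset.mem_erase]
      have hz'a : z'.coeff a = z.coeff a - (Finsupp.single g (z.coeff g)) a
          + (Finsupp.single g' (z.coeff g)) a := by
        rw [hz', hq, MonoidAlgebra.coeff_sub, MonoidAlgebra.coeff_sub, Finsupp.sub_apply,
          Finsupp.sub_apply, MonoidAlgebra.coeff_single, MonoidAlgebra.coeff_single]; ring
      by_cases hag : a = g
      · exfalso
        apply ha
        rw [hz'a, hag]
        rw [Finsupp.single_eq_same, Finsupp.single_eq_of_ne (by exact hne.symm)]
        ring
      refine ⟨hag, ?_⟩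
      by_cases hag' : a = g'
      · rw [hag']; exact hg'su
      · rw [Finsupp.mem_support_iff]
        intro haz
        apply ha
        rw [hz'a, haz, Finsupp.single_eq_of_ne hag,
          Finsupp.single_eq_of_ne hag']
        ring
    have hcard' : z'.coeff.support.card ≤ n := by
      have h1 : (z.coeff.support.erase g).card = z.coeff.support.card - 1 :=
        Finset.card_erase_of_mem hg
      have h2 := Finset.card_le_card hsupp
      omega
    have hS' : ∀ g'', S H' g'' z' = 0 := by
      intro g''
      rw [hz', map_sub, hS, S_eq_zero_of_mem_grpIdeal hqI, sub_zero]
    have hz'I := ih z' hcard' hS'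
    have : z = z' + q := by rw [hz']; abel
    rw [this]
    exact add_mem hz'I hqI

lemma mem_grpIdeal_of_S {H' : Subgroup G} {z : MonoidAlgebra k G}
    (hS : ∀ g, S H' g z = 0) : z ∈ grpIdeal k (H' : Set G) :=
  mem_grpIdeal_of_S_aux z.coeff.support.card z le_rfl hS

end Stmt5Aux


namespace Stmt5Aux

variable {k : Type} [CommRing k]

lemma grpIdeal_mono {S₁ S₂ : Set G} (h : S₁ ⊆ S₂) : grpIdeal k S₁ ≤ grpIdeal k S₂ :=
  Submodule.span_mono (Set.image_mono h)

lemma of_ofV_mul (a b : Vsp) :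
    (MonoidAlgebra.of k G) (ofV a) * (MonoidAlgebra.of k G) (ofV b)
      = MonoidAlgebra.of k G (ofV (a + b)) := by
  rw [← map_mul, ← ofV_add]

lemma grpIdeal_sup_le {P Q : AddSubgroup Vsp} :
    grpIdeal k (subgroupOfV (P ⊔ Q) : Set G) ≤
      grpIdeal k (subgroupOfV P : Set G) ⊔ grpIdeal k (subgroupOfV Q : Set G) := by
  apply Ideal.span_le.2
  rintro _ ⟨x, hx, rfl⟩
  obtain ⟨v, hv, rfl⟩ := mem_subgroupOfV.1 hx
  obtain ⟨a, ha, b, hb, rfl⟩ := AddSubgroup.mem_sup.1 hv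
  show (MonoidAlgebra.of k G) (ofV (a + b)) - 1 ∈ _
  have hsplit : (MonoidAlgebra.of k G) (ofV (a + b)) - 1
      = MonoidAlgebra.of k G (ofV a) * (MonoidAlgebra.of k G (ofV b) - 1)
        + (MonoidAlgebra.of k G (ofV a) - 1) := by
    rw [mul_sub, of_ofV_mul, mul_one]
    abel
  rw [hsplit]
  apply Submodule.add_mem
  · apply Submodule.mem_sup_right
    exact Ideal.mul_mem_left _ _
      (Ideal.subset_span ⟨ofV b, ofV_mem_subgroupOfV.2 hb, rfl⟩)
  · apply Submodule.mem_sup_left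
    exact Ideal.subset_span ⟨ofV a, ofV_mem_subgroupOfV.2 ha, rfl⟩

lemma augV_eq (N : AddSubgroup Vsp) : augV N = grpIdeal ℤ (subgroupOfV N : Set G) := by
  unfold augV grpIdeal
  congr 1
  ext x
  constructor
  · rintro ⟨v, hv, rfl⟩
    exact ⟨ofV v, ofV_mem_subgroupOfV.2 hv, rfl⟩
  · rintro ⟨g, hg, rfl⟩
    obtain ⟨v, hv, rfl⟩ := mem_subgroupOfV.1 hg
    exact ⟨v, hv, rfl⟩

lemma coeffHom_apply (q : ℕ) (z : ZG) :
    coeffHom q z = MonoidAlgebra.ofCoeff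
      (Finsupp.mapRange (Int.cast : ℤ → ZMod q) Int.cast_zero z.coeff) := by
  induction z using MonoidAlgebra.induction_linear with
  | zero => simp
  | add a b ha hb =>
    rw [map_add, ha, hb, MonoidAlgebra.coeff_add,
      Finsupp.mapRange_add (by intro x y; push_cast; ring) a.coeff b.coeff,
      MonoidAlgebra.ofCoeff_add]
  | single g c =>
    show (MonoidAlgebra.lift ℤ (MonoidAlgebra (ZMod q) G) G) (MonoidAlgebra.of (ZMod q) G)
        (MonoidAlgebra.single g c) = _
    rw [MonoidAlgebra.lift_single, MonoidAlgebra.coeff_single, Finsupp.mapRange_single,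
      MonoidAlgebra.ofCoeff_single, MonoidAlgebra.of_apply, MonoidAlgebra.smul_single]
    congr 1
    simp

lemma coeffHom_of (q : ℕ) (g : G) :
    coeffHom q (MonoidAlgebra.of ℤ G g) = MonoidAlgebra.of (ZMod q) G g := by
  rw [MonoidAlgebra.of_apply, coeffHom_apply, MonoidAlgebra.coeff_single, Finsupp.mapRange_single,
    MonoidAlgebra.ofCoeff_single, MonoidAlgebra.of_apply]
  norm_num

lemma coeffHom_surjective (q : ℕ) : Function.Surjective (coeffHom q) := by
  intro y
  induction y using MonoidAlgebra.induction_linear with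
  | zero => exact ⟨0, map_zero _⟩
  | add a b ha hb =>
    obtain ⟨a', rfl⟩ := ha
    obtain ⟨b', rfl⟩ := hb
    exact ⟨a' + b', map_add _ _ _⟩
  | single g c =>
    obtain ⟨c', rfl⟩ := ZMod.intCast_surjective c
    exact ⟨MonoidAlgebra.single g c', by
      rw [coeffHom_apply, MonoidAlgebra.coeff_single, Finsupp.mapRange_single,
        MonoidAlgebra.ofCoeff_single]⟩

lemma S_coeffHom (q : ℕ) (H' : Subgroup G) (g : G) (z : ZG) :
    S H' g (coeffHom q z) = ((S H' g z : ℤ) : ZMod q) := by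
  rw [coeffHom_apply, S_apply, S_apply, MonoidAlgebra.coeff_ofCoeff,
    Finsupp.sum_mapRange_index (by intro a; split <;> rfl)]
  rw [Finsupp.sum, Finsupp.sum]
  push_cast
  apply Finset.sum_congr rfl
  intro x _
  split <;> simp

lemma coeffHom_mem_grpIdeal {q : ℕ} {S' : Set G} {z : ZG} (hz : z ∈ grpIdeal ℤ S') :
    coeffHom q z ∈ grpIdeal (ZMod q) S' := by
  refine Submodule.span_induction ?_ ?_ ?_ ?_ hz
  · rintro x ⟨y, hy, rfl⟩
    show coeffHom q (MonoidAlgebra.of ℤ G y - 1) ∈ _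
    rw [map_sub, map_one, coeffHom_of]
    exact Ideal.subset_span ⟨y, hy, rfl⟩
  · rw [map_zero]; exact zero_mem _
  · intro x y _ _ hx hy; rw [map_add]; exact add_mem hx hy
  · intro a x _ hx
    rw [smul_eq_mul, map_mul]
    exact Ideal.mul_mem_left _ _ hx

lemma exists_lift_grpIdeal {q : ℕ} {S' : Set G} {y : MonoidAlgebra (ZMod q) G}
    (hy : y ∈ grpIdeal (ZMod q) S') :
    ∃ z : ZG, z ∈ grpIdeal ℤ S' ∧ coeffHom q z = y := by
  refine Submodule.span_induction ?_ ?_ ?_ ?_ hy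
  · rintro x ⟨g, hg, rfl⟩
    refine ⟨MonoidAlgebra.of ℤ G g - 1, Ideal.subset_span ⟨g, hg, rfl⟩, ?_⟩
    rw [map_sub, map_one, coeffHom_of]
  · exact ⟨0, zero_mem _, map_zero _⟩
  · rintro x y _ _ ⟨a, haI, rfl⟩ ⟨b, hbI, rfl⟩
    exact ⟨a + b, add_mem haI hbI, map_add _ _ _⟩
  · rintro r x _ ⟨a, haI, rfl⟩
    obtain ⟨r', rfl⟩ := coeffHom_surjective q r
    exact ⟨r' * a, Ideal.mul_mem_left _ _ haI, by rw [smul_eq_mul, map_mul]⟩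

lemma coeffHom_zsmul_eq_zero {q : ℕ} {n : ℤ} (x : ZG) (h : (q : ℤ) ∣ n) :
    coeffHom q (n • x) = 0 := by
  rw [map_zsmul, ← Int.cast_smul_eq_zsmul (ZMod q),
    (ZMod.intCast_zmod_eq_zero_iff_dvd n q).2 h, zero_smul]

lemma dvd_S_iff {q : ℕ} {H' : Subgroup G} {z : ZG} :
    (∀ g, (q : ℤ) ∣ S H' g z) ↔ coeffHom q z ∈ grpIdeal (ZMod q) (H' : Set G) := by
  constructor
  · intro h
    apply mem_grpIdeal_of_S
    intro g
    rw [S_coeffHom, ZMod.intCast_zmod_eq_zero_iff_dvd]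
    exact h g
  · intro h g
    have hz := S_eq_zero_of_mem_grpIdeal h g
    rw [S_coeffHom, ZMod.intCast_zmod_eq_zero_iff_dvd] at hz
    exact hz

end Stmt5Aux


namespace Stmt5Aux

lemma smul_ui_eq_zero_iff (p : ℕ → ℕ) (l : Y) (i : ℕ) (z : ZG) :
    z • ui p l i = 0 ↔
      coeffHom (p i) z ∈ grpIdeal (ZMod (p i)) (subgroupOfV (Hsub l i) : Set G) := by
  have h1 : z • ui p l i = Submodule.Quotient.mk (coeffHom (p i) z * 1) := by
    show (coeffHom (p i) z) • (Submodule.Quotient.mk 1 :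
      MonoidAlgebra (ZMod (p i)) G ⧸ grpIdeal (ZMod (p i)) (subgroupOfV (Hsub l i) : Set G)) = _
    rw [← Submodule.Quotient.mk_smul, smul_eq_mul]
  rw [h1, mul_one]
  exact Submodule.Quotient.mk_eq_zero _

lemma mem_Jl_iff {p : ℕ → ℕ} {l : Y} {z : ZG} :
    z ∈ Jl p l ↔ ∀ i : ℕ, 1 ≤ i →
      coeffHom (p i) z ∈ grpIdeal (ZMod (p i)) (subgroupOfV (Hsub l i) : Set G) := by
  rw [Jl, LinearMap.mem_ker, LinearMap.toSpanSingleton_apply, funext_iff]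
  constructor
  · intro h i hi
    have hh := h ⟨i, hi⟩
    rw [Pi.smul_apply] at hh
    exact (smul_ui_eq_zero_iff p l i z).1 hh
  · intro h i
    rw [Pi.smul_apply]
    exact (smul_ui_eq_zero_iff p l i.1 z).2 (h i.1 i.2)

lemma Hsub_mono (l : Y) {i j : ℕ} (hij : i ≤ j) : Hsub l i ≤ Hsub l j := by
  unfold Hsub
  apply AddSubgroup.closure_mono
  apply Set.union_subset_union
  · apply Set.union_subset_union <;>
      exact Set.image_mono (Set.Icc_subset_Icc_right hij)
  · exact Set.image_mono (Set.Icc_subset_Icc_right hij)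

lemma modular_inf (H A N : AddSubgroup Vsp) (hHA : H ≤ A) :
    (N ⊔ H) ⊓ A = (N ⊓ A) ⊔ H := by
  ext v
  constructor
  · rintro hv
    rw [AddSubgroup.mem_inf] at hv
    obtain ⟨hv1, hv2⟩ := hv
    obtain ⟨n, hn, h', hh, rfl⟩ := AddSubgroup.mem_sup.1 hv1
    have hnA : n ∈ A := by
      have := A.sub_mem hv2 (hHA hh)
      simpa using this
    exact AddSubgroup.mem_sup.2 ⟨n, AddSubgroup.mem_inf.2 ⟨hn, hnA⟩, h', hh, rfl⟩
  · rintro hv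
    obtain ⟨n, hn, h', hh, rfl⟩ := AddSubgroup.mem_sup.1 hv
    rw [AddSubgroup.mem_inf] at hn
    exact AddSubgroup.mem_inf.2
      ⟨AddSubgroup.mem_sup.2 ⟨n, hn.1, h', hh, rfl⟩, A.add_mem hn.2 (hHA hh)⟩

noncomputable def rho (M' : Subgroup G) (x : G) : G := (QuotientGroup.mk x : G ⧸ M').out

lemma rho_spec (M' : Subgroup G) (x : G) : (rho M' x)⁻¹ * x ∈ M' := by
  have h : (QuotientGroup.mk (rho M' x) : G ⧸ M') = QuotientGroup.mk x :=
    QuotientGroup.out_eq' _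
  exact QuotientGroup.eq.1 h

lemma rho_eq_of_rel (M' : Subgroup G) {x y : G} (h : x⁻¹ * y ∈ M') :
    rho M' x = rho M' y := by
  unfold rho
  rw [QuotientGroup.eq.2 h]

lemma rho_rho (M' : Subgroup G) (x : G) : rho M' (rho M' x) = rho M' x :=
  rho_eq_of_rel M' (rho_spec M' x)

lemma eventually_stable (l : Y) (F : Finset G) :
    ∃ i₀ : ℕ, 1 ≤ i₀ ∧ ∀ i, i₀ ≤ i → ∀ x ∈ F, ∀ y ∈ F,
      (x⁻¹ * y ∈ subgroupOfV (Hsub l i) ↔ x⁻¹ * y ∈ subgroupOfV (Hsub l i₀)) := by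
  classical
  set ff : G × G → ℕ := fun q => sInf {j | q.1⁻¹ * q.2 ∈ subgroupOfV (Hsub l j)} with hff
  set i₀ := max 1 ((F ×ˢ F).sup ff) with hi₀def
  refine ⟨i₀, le_max_left _ _, ?_⟩
  intro i hi x hx y hy
  have hmono : ∀ {a b : ℕ}, a ≤ b → x⁻¹ * y ∈ subgroupOfV (Hsub l a) →
      x⁻¹ * y ∈ subgroupOfV (Hsub l b) :=
    fun hab hm => subgroupOfV_mono (Hsub_mono l hab) hm
  by_cases hev : ∃ j, x⁻¹ * y ∈ subgroupOfV (Hsub l j)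
  · have hne : {j | x⁻¹ * y ∈ subgroupOfV (Hsub l j)}.Nonempty := hev
    have hmem := Nat.sInf_mem hne
    have hle : ff (x, y) ≤ i₀ := by
      refine le_trans ?_ (le_max_right _ _)
      exact Finset.le_sup (Finset.mem_product.2 ⟨hx, hy⟩)
    exact ⟨fun _ => hmono hle hmem, fun _ => hmono (le_trans hle hi) hmem⟩
  · push_neg at hev
    exact ⟨fun hm => absurd hm (hev _), fun hm => absurd hm (hev _)⟩

lemma int_eq_zero_of_prime_dvd (p : ℕ → ℕ) (hp : ∀ i, 1 ≤ i → (p i).Prime)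
    (hinj : ∀ i j, 1 ≤ i → 1 ≤ j → p i = p j → i = j) (i₀ : ℕ) (hi₀ : 1 ≤ i₀)
    (s : ℤ) (hdvd : ∀ i, i₀ ≤ i → (p i : ℤ) ∣ s) : s = 0 := by
  by_contra hs
  have hb : ∀ i, i₀ ≤ i → p i ≤ s.natAbs := by
    intro i hi
    have h1 : (p i : ℤ) ≤ |s| :=
      Int.le_of_dvd (abs_pos.2 hs) ((hdvd i hi).trans (self_dvd_abs s))
    have h2 : |s| = (s.natAbs : ℤ) := Int.abs_eq_natAbs s
    rw [h2] at h1
    exact_mod_cast h1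
  have hcard := Finset.card_le_card_of_injOn p
    (s := Finset.Icc i₀ (i₀ + s.natAbs)) (t := Finset.Icc 1 s.natAbs)
    (fun i hi => by
      rw [Finset.coe_Icc, Set.mem_Icc] at hi
      rw [Finset.coe_Icc, Set.mem_Icc]
      exact ⟨(hp i (le_trans hi₀ hi.1)).one_lt.le.trans' (by omega), hb i hi.1⟩)
    (fun a ha b hb hab => by
      rw [Finset.coe_Icc, Set.mem_Icc] at ha hb
      exact hinj a b (le_trans hi₀ ha.1) (le_trans hi₀ hb.1) hab)
  rw [Nat.card_Icc, Nat.card_Icc] at hcard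
  omega

end Stmt5Aux


namespace Stmt5Aux

lemma crt_coeff (p : ℕ → ℕ) (hp : ∀ i, 1 ≤ i → (p i).Prime)
    (hinj : ∀ i j, 1 ≤ i → 1 ≤ j → p i = p j → i = j) (i₀ : ℕ) {i : ℕ}
    (hi : i ∈ Finset.Ico 1 i₀) :
    ∃ μ : ℤ, (p i : ℤ) ∣ (μ - 1) ∧ ∀ j ∈ Finset.Ico 1 i₀, j ≠ i → (p j : ℤ) ∣ μ := by
  have hi1 : 1 ≤ i := (Finset.mem_Ico.1 hi).1
  have hcop : IsCoprime (∏ j ∈ (Finset.Ico 1 i₀).erase i, (p j : ℤ)) ((p i : ℕ) : ℤ) := by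
    apply IsCoprime.prod_left
    intro j hj
    rw [Finset.mem_erase] at hj
    rw [Nat.isCoprime_iff_coprime]
    exact (Nat.coprime_primes (hp j (Finset.mem_Ico.1 hj.2).1) (hp i hi1)).2
      (fun hh => hj.1 (hinj j i (Finset.mem_Ico.1 hj.2).1 hi1 hh))
  obtain ⟨u, v, huv⟩ := hcop
  refine ⟨u * ∏ j ∈ (Finset.Ico 1 i₀).erase i, (p j : ℤ), ?_, ?_⟩
  · have heq : u * ∏ j ∈ (Finset.Ico 1 i₀).erase i, (p j : ℤ) - 1 = -(v * (p i : ℤ)) := by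
      have h2 : u * ∏ j ∈ (Finset.Ico 1 i₀).erase i, (p j : ℤ) + v * (p i : ℤ) = 1 := huv
      linarith
    rw [heq]
    exact (dvd_neg).2 (Dvd.intro_left v rfl)
  · intro j hj hne
    exact Dvd.dvd.mul_left
      (Finset.dvd_prod_of_mem _ (Finset.mem_erase.2 ⟨hne, hj⟩)) u

end Stmt5Aux


namespace Stmt5Aux

variable {k : Type} [CommRing k]

lemma expand_E (r : G) (a n : Vsp) :
    MonoidAlgebra.single r (1 : ℤ) * (zOfV a - 1) * (zOfV n - 1)
      = MonoidAlgebra.single (r * ofV (a + n)) 1 - MonoidAlgebra.single (r * ofV a) 1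
        - MonoidAlgebra.single (r * ofV n) 1 + MonoidAlgebra.single r 1 := by
  have h1 : MonoidAlgebra.single r (1 : ℤ) * (zOfV a - 1)
      = MonoidAlgebra.single (r * ofV a) 1 - MonoidAlgebra.single r 1 := by
    rw [zOfV, MonoidAlgebra.of_apply, mul_sub, mul_one,
      MonoidAlgebra.single_mul_single, mul_one]
  rw [h1, sub_mul, mul_sub, mul_sub, mul_one, mul_one, zOfV, MonoidAlgebra.of_apply,
    MonoidAlgebra.single_mul_single, MonoidAlgebra.single_mul_single, mul_one,
    mul_assoc, ← ofV_add]
  abel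

lemma zOfV_sub_one_comm (a b : Vsp) :
    (zOfV a - 1) * (zOfV b - 1) = (zOfV b - 1) * (zOfV a - 1) := by
  have hcomm : zOfV a * zOfV b = zOfV b * zOfV a := by
    unfold zOfV
    rw [← map_mul, ← map_mul, ← ofV_add, ← ofV_add, add_comm]
  have expand : ∀ u v : ZG, (u - 1) * (v - 1) = u * v - u - v + 1 := by
    intros u v; noncomm_ring
  rw [expand, expand, hcomm]
  abel

lemma coset_coord (r : G) (s₀ s : Vsp) :
    (r * ofV s₀)⁻¹ * (r * ofV s) = ofV (s - s₀) := by
  rw [mul_inv_rev, mul_assoc, inv_mul_cancel_left, ofV_inv, ← ofV_add, neg_add_eq_sub]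

lemma eq_mul_of_coord {y r : G} {s : Vsp} (h : r⁻¹ * y = ofV s) : y = r * ofV s := by
  rw [← h, mul_inv_cancel_left]

lemma S_filter (H' : Subgroup G) (g : G) (z : MonoidAlgebra k G) (P : G → Prop) [DecidablePred P] :
    S H' g (MonoidAlgebra.ofCoeff (z.coeff.filter P))
      = ∑ y ∈ z.coeff.support, if P y then (if g⁻¹ * y ∈ H' then z.coeff y else 0) else 0 := by
  classical
  rw [S_apply, MonoidAlgebra.coeff_ofCoeff, Finsupp.sum, Finsupp.support_filter, Finset.sum_filter]
  refine Finset.sum_congr rfl ?_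
  intro y _
  by_cases hP : P y
  · simp [hP, Finsupp.filter_apply]
  · simp [hP]

lemma S_eq_sum (H' : Subgroup G) (g : G) (z : MonoidAlgebra k G) :
    S H' g z = ∑ y ∈ z.coeff.support, if g⁻¹ * y ∈ H' then z.coeff y else 0 := rfl

end Stmt5Aux


namespace Stmt5Aux

lemma coord_of_rel (Msub : AddSubgroup Vsp) {X : AddSubgroup Vsp} (hXM : X ≤ Msub)
    {y₀ y : G} {s₀ s : Vsp}
    (hy₀ : (rho (subgroupOfV Msub) y₀)⁻¹ * y₀ = ofV s₀)
    (hy : (rho (subgroupOfV Msub) y)⁻¹ * y = ofV s)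
    (hrel : y₀⁻¹ * y ∈ subgroupOfV X) :
    y₀⁻¹ * y = ofV (s - s₀) := by
  have hM : y₀⁻¹ * y ∈ subgroupOfV Msub := subgroupOfV_mono hXM hrel
  have hρ : rho (subgroupOfV Msub) y₀ = rho (subgroupOfV Msub) y := rho_eq_of_rel _ hM
  have h1 : y₀ = rho (subgroupOfV Msub) y₀ * ofV s₀ := eq_mul_of_coord hy₀
  have h2 : y = rho (subgroupOfV Msub) y₀ * ofV s := by
    rw [hρ]; exact eq_mul_of_coord hy
  calc y₀⁻¹ * y = (rho (subgroupOfV Msub) y₀ * ofV s₀)⁻¹ *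
        (rho (subgroupOfV Msub) y₀ * ofV s) := by rw [← h1, ← h2]
    _ = ofV (s - s₀) := coset_coord _ _ _

section Core

variable (H A N : AddSubgroup Vsp)

/-- `M = A ⊔ N`. -/
private abbrev Msub : AddSubgroup Vsp := A ⊔ N
/-- `K = N ⊔ H`. -/
private abbrev Ksub : AddSubgroup Vsp := N ⊔ H
/-- `H⁺ = H ⊔ (N ⊓ A)`. -/
private abbrev Hp : AddSubgroup Vsp := H ⊔ (N ⊓ A)

lemma hHpA (hHA : H ≤ A) : Hp H A N ≤ A := sup_le hHA inf_le_right
lemma hHpK (hHA : H ≤ A) : Hp H A N ≤ Ksub H N := sup_le le_sup_right (le_trans inf_le_left le_sup_left)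
lemma hAM : A ≤ Msub A N := le_sup_left
lemma hNM : N ≤ Msub A N := le_sup_right
lemma hHpM (hHA : H ≤ A) : Hp H A N ≤ Msub A N := le_trans (hHpA H A N hHA) (hAM A N)
lemma hKM (hHA : H ≤ A) : Ksub H N ≤ Msub A N :=
  sup_le (hNM A N) (le_trans hHA (hAM A N))
lemma hKA_inf (hHA : H ≤ A) : Ksub H N ⊓ A = Hp H A N := by
  rw [modular_inf H A N hHA, sup_comm]

/-- Structure hypothesis on the support of `z`. -/
abbrev Struct (z : ZG) : Prop :=
  ∀ y ∈ z.coeff.support, ∃ s : Vsp, (s ∈ A ∨ s ∈ N) ∧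
    (rho (subgroupOfV (Msub A N)) y)⁻¹ * y = ofV s

/-- N-type cosets: the `H⁺`-coset sum equals the `A`-coset sum. -/
lemma S_Hp_eq_S_A (hHA : H ≤ A) {z : ZG} (hstruct : Struct A N z) {y₀ : G} {s₀ : Vsp}
    (hs₀N : s₀ ∈ N) (hs₀Hp : s₀ ∉ Hp H A N)
    (hy₀ : (rho (subgroupOfV (Msub A N)) y₀)⁻¹ * y₀ = ofV s₀) :
    S (subgroupOfV (Hp H A N)) y₀ z = S (subgroupOfV A) y₀ z := by
  rw [S_eq_sum, S_eq_sum]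
  refine Finset.sum_congr rfl ?_
  intro y hy
  obtain ⟨s, hsAN, hys⟩ := hstruct y hy
  have hiff : y₀⁻¹ * y ∈ subgroupOfV (Hp H A N) ↔ y₀⁻¹ * y ∈ subgroupOfV A := by
    constructor
    · exact fun hmem => subgroupOfV_mono (hHpA H A N hHA) hmem
    · intro hmem
      have hcoord := coord_of_rel (Msub A N) (hAM A N) hy₀ hys hmem
      have hsub : s - s₀ ∈ A := by
        rw [hcoord] at hmem; exact ofV_mem_subgroupOfV.1 hmem
      rcases hsAN with hsA | hsN
      · exfalso
        apply hs₀Hp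
        have hs₀A : s₀ ∈ A := by
          have := A.sub_mem hsA hsub
          simpa using this
        exact (le_sup_right : N ⊓ A ≤ Hp H A N) (AddSubgroup.mem_inf.2 ⟨hs₀N, hs₀A⟩)
      · have : s - s₀ ∈ N ⊓ A := AddSubgroup.mem_inf.2 ⟨N.sub_mem hsN hs₀N, hsub⟩
        rw [hcoord]
        exact ofV_mem_subgroupOfV.2 ((le_sup_right : N ⊓ A ≤ Hp H A N) this)
  rw [if_congr hiff rfl rfl]

/-- (A ∖ H⁺)-type cosets: the `H⁺`-coset sum equals the `K`-coset sum. -/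
lemma S_Hp_eq_S_K (hHA : H ≤ A) {z : ZG} (hstruct : Struct A N z) {y₀ : G} {s₀ : Vsp}
    (hs₀A : s₀ ∈ A) (hs₀Hp : s₀ ∉ Hp H A N)
    (hy₀ : (rho (subgroupOfV (Msub A N)) y₀)⁻¹ * y₀ = ofV s₀) :
    S (subgroupOfV (Hp H A N)) y₀ z = S (subgroupOfV (Ksub H N)) y₀ z := by
  rw [S_eq_sum, S_eq_sum]
  refine Finset.sum_congr rfl ?_
  intro y hy
  obtain ⟨s, hsAN, hys⟩ := hstruct y hy
  have hiff : y₀⁻¹ * y ∈ subgroupOfV (Hp H A N) ↔ y₀⁻¹ * y ∈ subgroupOfV (Ksub H N) := by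
    constructor
    · exact fun hmem => subgroupOfV_mono (hHpK H A N hHA) hmem
    · intro hmem
      have hcoord := coord_of_rel (Msub A N) (hKM H A N hHA) hy₀ hys hmem
      have hsub : s - s₀ ∈ Ksub H N := by
        rw [hcoord] at hmem; exact ofV_mem_subgroupOfV.1 hmem
      rcases hsAN with hsA | hsN
      · have : s - s₀ ∈ Ksub H N ⊓ A :=
          AddSubgroup.mem_inf.2 ⟨hsub, A.sub_mem hsA hs₀A⟩
        rw [hKA_inf H A N hHA] at this
        rw [hcoord]
        exact ofV_mem_subgroupOfV.2 this
      · exfalso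
        apply hs₀Hp
        have hs₀K : s₀ ∈ Ksub H N := by
          have := (Ksub H N).sub_mem ((le_sup_left : N ≤ Ksub H N) hsN) hsub
          simpa using this
        have : s₀ ∈ Ksub H N ⊓ A := AddSubgroup.mem_inf.2 ⟨hs₀K, hs₀A⟩
        rw [hKA_inf H A N hHA] at this
        exact this
  rw [if_congr hiff rfl rfl]

end Core

end Stmt5Aux


namespace Stmt5Aux

lemma core_correction (H A N : AddSubgroup Vsp) (hHA : H ≤ A) (d : ℕ) (w : ZG)
    (h1 : w ∈ grpIdeal ℤ (subgroupOfV A : Set G))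
    (h2 : ∀ g, (d : ℤ) ∣ S (subgroupOfV (Ksub H N)) g w) :
    ∃ b' : ZG, b' ∈ augV N ∧ b' ∈ grpIdeal ℤ (subgroupOfV A : Set G) ∧
      coeffHom d (w - b') ∈ grpIdeal (ZMod d) (subgroupOfV H : Set G) := by
  classical
  set M' : Subgroup G := subgroupOfV (Msub A N) with hM'def
  have hchoice : ∀ x : G, ∃ a n : Vsp, a ∈ A ∧ n ∈ N ∧ (rho M' x)⁻¹ * x = ofV (a + n) := by
    intro x
    have hmem := rho_spec M' x
    obtain ⟨v, hv, hveq⟩ := mem_subgroupOfV.1 hmem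
    obtain ⟨a, ha, n, hn, hadd⟩ := AddSubgroup.mem_sup.1 hv
    exact ⟨a, n, ha, hn, by rw [hadd]; exact hveq.symm⟩
  choose αf νf hαf hνf hcoord using hchoice
  set bE : ZG := ∑ x ∈ w.coeff.support, w.coeff x •
      (MonoidAlgebra.single (rho M' x) (1:ℤ) * (zOfV (αf x) - 1) * (zOfV (νf x) - 1))
    with hbEdef
  have hbE_aug : bE ∈ augV N := by
    apply Submodule.sum_mem
    intro x _
    have hgen : zOfV (νf x) - 1 ∈ augV N := Ideal.subset_span ⟨νf x, hνf x, rfl⟩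
    exact zsmul_mem (Ideal.mul_mem_left _ _ hgen) _
  have hbE_A : bE ∈ grpIdeal ℤ (subgroupOfV A : Set G) := by
    apply Submodule.sum_mem
    intro x _
    have hswap : MonoidAlgebra.single (rho M' x) (1:ℤ) * (zOfV (αf x) - 1) * (zOfV (νf x) - 1)
        = MonoidAlgebra.single (rho M' x) (1:ℤ) * (zOfV (νf x) - 1) * (zOfV (αf x) - 1) := by
      rw [mul_assoc, mul_assoc, zOfV_sub_one_comm]
    rw [hswap]
    have hgen : zOfV (αf x) - 1 ∈ grpIdeal ℤ (subgroupOfV A : Set G) :=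
      Ideal.subset_span ⟨ofV (αf x), ofV_mem_subgroupOfV.2 (hαf x), rfl⟩
    exact zsmul_mem (Ideal.mul_mem_left _ _ hgen) _
  set z : ZG := w - bE with hzdef
  have hz_A : z ∈ grpIdeal ℤ (subgroupOfV A : Set G) := Submodule.sub_mem _ h1 hbE_A
  have hz_SA : ∀ g, S (subgroupOfV A) g z = 0 := S_eq_zero_of_mem_grpIdeal hz_A
  have hbE_K : bE ∈ grpIdeal ℤ (subgroupOfV (Ksub H N) : Set G) := by
    have hbE_N : bE ∈ grpIdeal ℤ (subgroupOfV N : Set G) := by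
      rw [← augV_eq]; exact hbE_aug
    exact grpIdeal_mono
      (SetLike.coe_subset_coe.2 (subgroupOfV_mono (le_sup_left : N ≤ Ksub H N))) hbE_N
  have hz_K : ∀ g, (d : ℤ) ∣ S (subgroupOfV (Ksub H N)) g z := by
    intro g
    have hw0 : S (subgroupOfV (Ksub H N)) g bE = 0 :=
      S_eq_zero_of_mem_grpIdeal hbE_K g
    rw [hzdef, map_sub, hw0, sub_zero]
    exact h2 g
  -- structure of the support of z
  have hw : w = ∑ x ∈ w.coeff.support, MonoidAlgebra.single x (w.coeff x) := by
    conv_lhs => rw [← MonoidAlgebra.sum_coeff_single w]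
    rfl
  have hzeq : z = ∑ x ∈ w.coeff.support, w.coeff x •
      (MonoidAlgebra.single (rho M' x * ofV (αf x)) (1:ℤ)
        + MonoidAlgebra.single (rho M' x * ofV (νf x)) 1
        - MonoidAlgebra.single (rho M' x) 1) := by
    rw [hzdef]
    nth_rewrite 1 [hw]
    rw [hbEdef, ← Finset.sum_sub_distrib]
    refine Finset.sum_congr rfl ?_
    intro x hx
    rw [expand_E]
    have hxeq : x = rho M' x * ofV (αf x + νf x) := eq_mul_of_coord (hcoord x)
    have hsx : MonoidAlgebra.single x (w.coeff x) = w.coeff x • MonoidAlgebra.single x (1:ℤ) := by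
      rw [MonoidAlgebra.smul_single, smul_eq_mul, mul_one]
    rw [hsx, ← smul_sub]
    congr 1
    rw [← hxeq]
    abel
  have hzstruct : Struct A N z := by
    intro y hy
    rw [hzeq, MonoidAlgebra.coeff_sum] at hy
    obtain ⟨x, hx, hyx⟩ := Finset.mem_biUnion.1 (Finsupp.support_finset_sum hy)
    rw [MonoidAlgebra.coeff_smul] at hyx
    have h3 := Finsupp.support_smul hyx
    have hcases : y = rho M' x * ofV (αf x) ∨ y = rho M' x * ofV (νf x) ∨ y = rho M' x := by
      by_contra hc
      push_neg at hc
      obtain ⟨hc1, hc2, hc3⟩ := hc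
      apply Finsupp.mem_support_iff.1 h3
      rw [MonoidAlgebra.coeff_sub, MonoidAlgebra.coeff_add, MonoidAlgebra.coeff_single,
        MonoidAlgebra.coeff_single, MonoidAlgebra.coeff_single,
        Finsupp.sub_apply, Finsupp.add_apply, Finsupp.single_apply, Finsupp.single_apply,
        Finsupp.single_apply, if_neg (fun hh => hc1 hh.symm), if_neg (fun hh => hc2 hh.symm),
        if_neg (fun hh => hc3 hh.symm)]
      ring
    have hρgen : ∀ s : Vsp, s ∈ Msub A N → rho M' (rho M' x * ofV s) = rho M' x := by
      intro s hs
      have hrel : (rho M' x)⁻¹ * (rho M' x * ofV s) ∈ M' := by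
        rw [inv_mul_cancel_left]
        exact ofV_mem_subgroupOfV.2 hs
      have h4 := rho_eq_of_rel M' hrel
      rw [rho_rho] at h4
      exact h4.symm
    rcases hcases with rfl | rfl | rfl
    · exact ⟨αf x, Or.inl (hαf x), by rw [hρgen _ (hAM A N (hαf x)), inv_mul_cancel_left]⟩
    · exact ⟨νf x, Or.inr (hνf x), by rw [hρgen _ (hNM A N (hνf x)), inv_mul_cancel_left]⟩
    · exact ⟨0, Or.inl (zero_mem A), by rw [rho_rho, inv_mul_cancel, ofV_zero]⟩
  -- the N ∖ H⁺ part of z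
  set Pred : G → Prop := fun y => ∃ s : Vsp, s ∈ N ∧ s ∉ Hp H A N ∧ (rho M' y)⁻¹ * y = ofV s
    with hPreddef
  set zN : ZG := MonoidAlgebra.ofCoeff (z.coeff.filter Pred) with hzNdef
  have hPred_of_rel : ∀ y₀ y : G, y ∈ z.coeff.support → Pred y₀ →
      y₀⁻¹ * y ∈ subgroupOfV (Hp H A N) → Pred y := by
    intro y₀ y hy hPy₀ hrel
    obtain ⟨s₀, hs₀N, hs₀Hp, hy₀c⟩ := hPy₀
    obtain ⟨s, hsAN, hys⟩ := hzstruct y hy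
    have hcoord2 := coord_of_rel (Msub A N) (hHpM H A N hHA) hy₀c hys hrel
    have hsub : s - s₀ ∈ Hp H A N := by
      rw [hcoord2] at hrel
      exact ofV_mem_subgroupOfV.1 hrel
    rcases hsAN with hsA | hsN
    · exfalso
      apply hs₀Hp
      have hs₀A : s₀ ∈ A := by
        have := A.sub_mem hsA (hHpA H A N hHA hsub)
        simpa using this
      exact (le_sup_right : N ⊓ A ≤ Hp H A N) (AddSubgroup.mem_inf.2 ⟨hs₀N, hs₀A⟩)
    · refine ⟨s, hsN, ?_, hys⟩
      intro hsHp
      apply hs₀Hp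
      have := (Hp H A N).sub_mem hsHp hsub
      simpa using this
  have hzN_Hp : ∀ g, (d : ℤ) ∣ S (subgroupOfV (Hp H A N)) g zN := by
    intro g
    by_cases hcos : ∃ y₀ ∈ zN.coeff.support, g⁻¹ * y₀ ∈ subgroupOfV (Hp H A N)
    · obtain ⟨y₀, hy₀su, hy₀cos⟩ := hcos
      rw [hzNdef, MonoidAlgebra.coeff_ofCoeff, Finsupp.support_filter, Finset.mem_filter] at hy₀su
      obtain ⟨hy₀z, hPy₀⟩ := hy₀su
      rw [S_basepoint hy₀cos]
      have e2 : S (subgroupOfV (Hp H A N)) y₀ zN = S (subgroupOfV (Hp H A N)) y₀ z := by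
        rw [hzNdef, S_filter, S_eq_sum]
        refine Finset.sum_congr rfl ?_
        intro y hy
        by_cases hcond : y₀⁻¹ * y ∈ subgroupOfV (Hp H A N)
        · rw [if_pos (hPred_of_rel y₀ y hy hPy₀ hcond), if_pos hcond]
        · simp [hcond]
      rw [e2]
      obtain ⟨s₀, hs₀N, hs₀Hp, hy₀c⟩ := hPy₀
      rw [S_Hp_eq_S_A H A N hHA hzstruct hs₀N hs₀Hp hy₀c, hz_SA]
      exact dvd_zero _
    · push_neg at hcos
      rw [S_eq_zero_of_disjoint hcos]
      exact dvd_zero _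
  have hzN_K : ∀ g, (d : ℤ) ∣ S (subgroupOfV (Ksub H N)) g zN := by
    have hmem := dvd_S_iff.1 hzN_Hp
    exact dvd_S_iff.2 (grpIdeal_mono
      (SetLike.coe_subset_coe.2 (subgroupOfV_mono (hHpK H A N hHA))) hmem)
  -- main divisibility claim for z
  have hzHp : ∀ g, (d : ℤ) ∣ S (subgroupOfV (Hp H A N)) g z := by
    intro g
    by_cases hcos : ∃ y₀ ∈ z.coeff.support, g⁻¹ * y₀ ∈ subgroupOfV (Hp H A N)
    · obtain ⟨y₀, hy₀su, hy₀cos⟩ := hcos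
      rw [S_basepoint hy₀cos]
      obtain ⟨s₀, hs₀AN, hy₀c⟩ := hzstruct y₀ hy₀su
      by_cases hs₀Hp : s₀ ∈ Hp H A N
      · -- base-point case
        set r : G := rho M' y₀ with hrdef
        have hrc : (rho M' r)⁻¹ * r = ofV 0 := by
          rw [hrdef, rho_rho, inv_mul_cancel, ofV_zero]
        have hbp : y₀⁻¹ * r ∈ subgroupOfV (Hp H A N) := by
          have hcalc : y₀⁻¹ * r = ofV (0 - s₀) := by
            have h0 : r = r * ofV 0 := by rw [ofV_zero, mul_one]
            calc y₀⁻¹ * r = (r * ofV s₀)⁻¹ * (r * ofV 0) := by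
                  rw [← eq_mul_of_coord hy₀c, ← h0]
              _ = ofV (0 - s₀) := coset_coord _ _ _
          rw [hcalc]
          exact ofV_mem_subgroupOfV.2 ((Hp H A N).sub_mem (zero_mem _) hs₀Hp)
        rw [S_basepoint hbp]
        have hfilter : z - zN = MonoidAlgebra.ofCoeff (z.coeff.filter (fun y => ¬ Pred y)) := by
          have hpn := Finsupp.filter_pos_add_filter_neg z.coeff Pred
          rw [hzNdef, ← MonoidAlgebra.coeff_inj, MonoidAlgebra.coeff_sub]
          exact sub_eq_of_eq_add' hpn.symm
        have e4 : S (subgroupOfV (Hp H A N)) r (z - zN)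
            = S (subgroupOfV (Ksub H N)) r (z - zN) := by
          rw [hfilter, S_filter, S_filter]
          refine Finset.sum_congr rfl ?_
          intro y hy
          by_cases hP : Pred y
          · rw [if_neg (not_not_intro hP), if_neg (not_not_intro hP)]
          · rw [if_pos hP, if_pos hP]
            have hiff2 : r⁻¹ * y ∈ subgroupOfV (Hp H A N)
                ↔ r⁻¹ * y ∈ subgroupOfV (Ksub H N) := by
              obtain ⟨s, hsAN, hys⟩ := hzstruct y hy
              constructor
              · exact fun hmem => subgroupOfV_mono (hHpK H A N hHA) hmem
              · intro hmem
                have hcoord2 := coord_of_rel (Msub A N) (hKM H A N hHA) hrc hys hmem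
                have hsK : s - 0 ∈ Ksub H N := by
                  rw [hcoord2] at hmem
                  exact ofV_mem_subgroupOfV.1 hmem
                rw [sub_zero] at hsK
                have hsHp : s ∈ Hp H A N := by
                  rcases hsAN with hsA | hsN
                  · have : s ∈ Ksub H N ⊓ A := AddSubgroup.mem_inf.2 ⟨hsK, hsA⟩
                    rw [hKA_inf H A N hHA] at this
                    exact this
                  · by_contra hsHp
                    exact hP ⟨s, hsN, hsHp, hys⟩
                rw [hcoord2, sub_zero]
                exact ofV_mem_subgroupOfV.2 hsHp
            rw [if_congr hiff2 rfl rfl]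
        have e5 : S (subgroupOfV (Hp H A N)) r zN = 0 := by
          apply S_eq_zero_of_disjoint
          intro y hy hrel
          rw [hzNdef, MonoidAlgebra.coeff_ofCoeff, Finsupp.support_filter, Finset.mem_filter] at hy
          obtain ⟨hyz, hPy⟩ := hy
          obtain ⟨s, hsN, hsHp, hys⟩ := hPy
          have hcoord2 := coord_of_rel (Msub A N) (hHpM H A N hHA) hrc hys hrel
          apply hsHp
          rw [hcoord2] at hrel
          have := ofV_mem_subgroupOfV.1 hrel
          rwa [sub_zero] at this
        have e6 : S (subgroupOfV (Hp H A N)) r z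
            = S (subgroupOfV (Ksub H N)) r z - S (subgroupOfV (Ksub H N)) r zN := by
          have h7 : S (subgroupOfV (Hp H A N)) r z
              = S (subgroupOfV (Hp H A N)) r (z - zN) + S (subgroupOfV (Hp H A N)) r zN := by
            conv_rhs => rw [map_sub]
            ring
          rw [h7, e4, e5, add_zero, map_sub]
        rw [e6]
        exact dvd_sub (hz_K r) (hzN_K r)
      · rcases hs₀AN with hs₀A | hs₀N
        · rw [S_Hp_eq_S_K H A N hHA hzstruct hs₀A hs₀Hp hy₀c]
          exact hz_K y₀
        · rw [S_Hp_eq_S_A H A N hHA hzstruct hs₀N hs₀Hp hy₀c, hz_SA]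
          exact dvd_zero _
    · push_neg at hcos
      rw [S_eq_zero_of_disjoint hcos]
      exact dvd_zero _
  -- conclude
  have hzmem : coeffHom d z ∈ grpIdeal (ZMod d) (subgroupOfV (Hp H A N) : Set G) :=
    dvd_S_iff.1 hzHp
  have hsup := grpIdeal_sup_le (k := ZMod d) (P := H) (Q := N ⊓ A) hzmem
  obtain ⟨ht, hht, ct, hct, hsum⟩ := Submodule.mem_sup.1 hsup
  obtain ⟨bC, hbCI, hbCeq⟩ := exists_lift_grpIdeal hct
  refine ⟨bE + bC, ?_, ?_, ?_⟩
  · refine add_mem hbE_aug ?_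
    rw [augV_eq]
    exact grpIdeal_mono
      (SetLike.coe_subset_coe.2 (subgroupOfV_mono inf_le_left)) hbCI
  · exact add_mem hbE_A (grpIdeal_mono
      (SetLike.coe_subset_coe.2 (subgroupOfV_mono inf_le_right)) hbCI)
  · have hws : w - (bE + bC) = z - bC := by rw [hzdef]; abel
    rw [hws, map_sub, hbCeq, ← hsum]
    have : ht + ct - ct = ht := by abel
    rw [this]
    exact hht

end Stmt5Aux


namespace Stmt5Aux

lemma Jl_le (p : ℕ → ℕ) (hp : ∀ i, 1 ≤ i → (p i).Prime)
    (hinj : ∀ i j, 1 ≤ i → 1 ≤ j → p i = p j → i = j)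
    (γ β : Y) (N : AddSubgroup Vsp)
    (h : ∀ i : ℕ, 1 ≤ i → N ⊔ Hsub γ i = N ⊔ Hsub β i) :
    Jl p γ ≤ Jl p β ⊔ augV N := by
  classical
  intro z hz
  rw [mem_Jl_iff] at hz
  obtain ⟨i₀, hi₀1, hstab⟩ := eventually_stable γ z.coeff.support
  have hSz : ∀ g, S (subgroupOfV (Hsub γ i₀)) g z = 0 := by
    intro g
    by_cases hcos : ∃ y₀ ∈ z.coeff.support, g⁻¹ * y₀ ∈ subgroupOfV (Hsub γ i₀)
    · obtain ⟨y₀, hy₀su, hy₀cos⟩ := hcos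
      rw [S_basepoint hy₀cos]
      apply int_eq_zero_of_prime_dvd p hp hinj i₀ hi₀1
      intro i hi
      have hdvd : (p i : ℤ) ∣ S (subgroupOfV (Hsub γ i)) y₀ z :=
        dvd_S_iff.2 (hz i (le_trans hi₀1 hi)) y₀
      have heq : S (subgroupOfV (Hsub γ i)) y₀ z
          = S (subgroupOfV (Hsub γ i₀)) y₀ z := by
        rw [S_eq_sum, S_eq_sum]
        refine Finset.sum_congr rfl ?_
        intro y hy
        exact if_congr (hstab i hi y₀ hy₀su y hy) rfl rfl
      rwa [heq] at hdvd
    · push_neg at hcos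
      exact S_eq_zero_of_disjoint hcos
  have hzI : z ∈ grpIdeal ℤ (subgroupOfV (Hsub γ i₀) : Set G) := mem_grpIdeal_of_S hSz
  have hzK : z ∈ grpIdeal ℤ (subgroupOfV (N ⊔ Hsub β i₀) : Set G) := by
    have h1 : z ∈ grpIdeal ℤ (subgroupOfV (N ⊔ Hsub γ i₀) : Set G) :=
      grpIdeal_mono (SetLike.coe_subset_coe.2 (subgroupOfV_mono le_sup_right)) hzI
    rwa [h i₀ hi₀1] at h1
  have hsplit := grpIdeal_sup_le (k := ℤ) (P := N) (Q := Hsub β i₀) hzK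
  obtain ⟨b, hb, w, hwmem, hsum⟩ := Submodule.mem_sup.1 hsplit
  have hbaug : b ∈ augV N := by rw [augV_eq]; exact hb
  have hcorr : ∀ i ∈ Finset.Ico 1 i₀, ∃ b' : ZG, b' ∈ augV N ∧
      b' ∈ grpIdeal ℤ (subgroupOfV (Hsub β i₀) : Set G) ∧
      coeffHom (p i) (w - b') ∈ grpIdeal (ZMod (p i)) (subgroupOfV (Hsub β i) : Set G) := by
    intro i hi
    obtain ⟨hi1, hii₀⟩ := Finset.mem_Ico.1 hi
    refine core_correction (Hsub β i) (Hsub β i₀) N (Hsub_mono β hii₀.le) (p i) w hwmem ?_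
    apply dvd_S_iff.2
    have hwz : w = z - b := by rw [← hsum]; abel
    rw [hwz, map_sub]
    apply Submodule.sub_mem
    · have h2 : coeffHom (p i) z
          ∈ grpIdeal (ZMod (p i)) (subgroupOfV (Hsub γ i) : Set G) := hz i hi1
      have h3 := grpIdeal_mono (SetLike.coe_subset_coe.2
        (subgroupOfV_mono (le_sup_right : Hsub γ i ≤ N ⊔ Hsub γ i))) h2
      rwa [h i hi1] at h3
    · exact coeffHom_mem_grpIdeal (grpIdeal_mono (SetLike.coe_subset_coe.2
        (subgroupOfV_mono (le_sup_left : N ≤ N ⊔ Hsub β i))) hb)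
  choose bfun hba hbA hbH using hcorr
  choose μf hμ1 hμ2 using fun (i : ℕ) (hi : i ∈ Finset.Ico 1 i₀) => crt_coeff p hp hinj i₀ hi
  set bstar : ZG := ∑ i ∈ (Finset.Ico 1 i₀).attach, (μf i.1 i.2) • bfun i.1 i.2 with hbstar
  have hbstar_aug : bstar ∈ augV N := by
    apply Submodule.sum_mem
    intro i _
    exact zsmul_mem (hba i.1 i.2) _
  have hbstar_A : bstar ∈ grpIdeal ℤ (subgroupOfV (Hsub β i₀) : Set G) := by
    apply Submodule.sum_mem
    intro i _
    exact zsmul_mem (hbA i.1 i.2) _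
  have hJlmem : w - bstar ∈ Jl p β := by
    rw [mem_Jl_iff]
    intro j hj1
    by_cases hjcase : j < i₀
    · have hjmem : j ∈ Finset.Ico 1 i₀ := Finset.mem_Ico.2 ⟨hj1, hjcase⟩
      have hcb : coeffHom (p j) bstar = coeffHom (p j) (bfun j hjmem) := by
        rw [hbstar, map_sum]
        rw [Finset.sum_eq_single (⟨j, hjmem⟩ : {x // x ∈ Finset.Ico 1 i₀})]
        · have hrw : (μf j hjmem) • bfun j hjmem
              = (μf j hjmem - 1) • bfun j hjmem + bfun j hjmem := by
            rw [sub_smul, one_smul]; abel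
          rw [hrw, map_add, coeffHom_zsmul_eq_zero _ (hμ1 j hjmem), zero_add]
        · intro i _ hne
          exact coeffHom_zsmul_eq_zero _
            (hμ2 i.1 i.2 j hjmem (fun hh => hne (Subtype.ext hh.symm)))
        · intro habs
          exact absurd (Finset.mem_attach _ _) habs
      rw [map_sub, hcb, ← map_sub]
      exact hbH j hjmem
    · push_neg at hjcase
      apply coeffHom_mem_grpIdeal
      have hmono := grpIdeal_mono (k := ℤ) (SetLike.coe_subset_coe.2
        (subgroupOfV_mono (Hsub_mono β hjcase)))
      exact Submodule.sub_mem _ (hmono hwmem) (hmono hbstar_A)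
  have hzfinal : z = (w - bstar) + (b + bstar) := by rw [← hsum]; abel
  rw [hzfinal]
  exact Submodule.add_mem _ (Submodule.mem_sup_left hJlmem)
    (Submodule.mem_sup_right (Submodule.add_mem _ hbaug hbstar_aug))

end Stmt5Aux

theorem stmt5 (p : ℕ → ℕ) (hp : ∀ i, 1 ≤ i → (p i).Prime)
    (hinj : ∀ i j, 1 ≤ i → 1 ≤ j → p i = p j → i = j)
    (γ β : Y) (N : AddSubgroup Vsp) (hN : (subgroupOfV N).Normal)
    (h : ∀ i : ℕ, 1 ≤ i → N ⊔ Hsub γ i = N ⊔ Hsub β i) :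
    Jl p γ ⊔ augV N = Jl p β ⊔ augV N := by
  apply le_antisymm
  · exact sup_le (Stmt5Aux.Jl_le p hp hinj γ β N h) le_sup_right
  · exact sup_le (Stmt5Aux.Jl_le p hp hinj β γ N (fun i hi => (h i hi).symm)) le_sup_right
end
end

section
/- The map Y → {right ideals of ℤG} given by λ ↦ J_λ is injective; equivalently, distinct sequences λ ∈ {0,1}^ℕ give distinct annihilator ideals J_λ. -/
noncomputable section

lemma mul_of_eq_mapDomain {k : Type} [CommRing k] (x : MonoidAlgebra k G) (h : G) :
    (x * MonoidAlgebra.of k G h).coeff = Finsupp.mapDomain (· * h) x.coeff := by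
  ext g
  rw [MonoidAlgebra.of_apply]
  have he : (· * h) = ⇑(Equiv.mulRight h) := rfl
  rw [he, Finsupp.mapDomain_equiv_apply]
  have hg : g = (Equiv.mulRight h).symm g * h := by simp
  conv_lhs => rw [hg]
  rw [MonoidAlgebra.coeff_mul_single_apply, mul_one]
  rw [mul_inv_cancel_right]

lemma sub_one_mem_grpIdeal_iff {k : Type} [CommRing k] [Nontrivial k] (H : Subgroup G) (g : G) :
    (MonoidAlgebra.of k G g - 1) ∈ grpIdeal k (H : Set G) ↔ g ∈ H := by
  constructor
  · intro hmem
    set ψ : MonoidAlgebra k G →ₗ[k] ((G ⧸ H) →₀ k) :=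
      Finsupp.lmapDomain k k (QuotientGroup.mk (s := H)) ∘ₗ
        (MonoidAlgebra.coeffLinearEquiv k).toLinearMap with hψ
    have key : ∀ x ∈ grpIdeal k (H : Set G), ∀ r : MonoidAlgebra k G, ψ (r * x) = 0 := by
      intro x hx
      refine Submodule.span_induction ?_ ?_ ?_ ?_ hx
      · rintro _ ⟨h, hh, rfl⟩ r
        rw [mul_sub, mul_one, map_sub]
        have h2 : ψ (r * MonoidAlgebra.of k G h) = ψ r := by
          show Finsupp.mapDomain (QuotientGroup.mk (s := H)) (r * MonoidAlgebra.of k G h).coeff =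
            Finsupp.mapDomain (QuotientGroup.mk (s := H)) r.coeff
          rw [mul_of_eq_mapDomain, ← Finsupp.mapDomain_comp]
          exact Finsupp.mapDomain_congr (fun x _ => QuotientGroup.mk_mul_of_mem x hh)
        rw [h2, sub_self]
      · intro r; rw [mul_zero, map_zero]
      · intro a b _ _ ha hb r; rw [mul_add, map_add, ha, hb, add_zero]
      · intro a b _ hb r; rw [smul_eq_mul, ← mul_assoc]; exact hb (r * a)
    have h1 : ψ (MonoidAlgebra.of k G g - 1) = 0 := by
      simpa using key _ hmem 1
    rw [map_sub] at h1
    have h2 : ψ (MonoidAlgebra.of k G g) = Finsupp.single (QuotientGroup.mk g : G ⧸ H) 1 := by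
      show Finsupp.mapDomain _ (Finsupp.single g 1) = _
      exact Finsupp.mapDomain_single
    have h3 : ψ (1 : MonoidAlgebra k G) = Finsupp.single (QuotientGroup.mk 1 : G ⧸ H) 1 := by
      show Finsupp.mapDomain _ (Finsupp.single 1 1) = _
      exact Finsupp.mapDomain_single
    rw [h2, h3, sub_eq_zero] at h1
    rcases (Finsupp.single_eq_single_iff _ _ _ _).mp h1 with ⟨hq, -⟩ | ⟨h10, -⟩
    · have : g⁻¹ * 1 ∈ H := QuotientGroup.eq.mp hq
      rwa [mul_one, inv_mem_iff] at this
    · exact absurd h10 one_ne_zero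
  · intro hg
    exact Ideal.subset_span ⟨g, hg, rfl⟩

lemma ofV_mem_subgroupOfV_iff (N : AddSubgroup Vsp) (v : Vsp) :
    ofV v ∈ subgroupOfV N ↔ v ∈ N := by
  rw [subgroupOfV, Subgroup.mem_map]
  constructor
  · rintro ⟨x, hx, hxv⟩
    have hx2 : x = Multiplicative.ofAdd v := SemidirectProduct.inl_injective hxv
    subst hx2
    exact hx
  · intro hv
    exact ⟨Multiplicative.ofAdd v, hv, rfl⟩

lemma cseq_odd_false {l : Y} {k : ℕ} (hl : l k = false) : cseq l (2*k+1) = e ((k:ℤ)+1) := by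
  have h1 : (2*k+1) % 2 = 1 := by omega
  have h2 : (2*k+1+1)/2 = k+1 := by omega
  have h3 : (((2*k+1 : ℕ) : ℤ) + 1) / 2 = (k:ℤ)+1 := by omega
  rw [cseq, h1, h2, h3]
  simp [hl]

lemma cseq_odd_true {l : Y} {k : ℕ} (hl : l k = true) : cseq l (2*k+1) = f ((k:ℤ)+1) := by
  have h1 : (2*k+1) % 2 = 1 := by omega
  have h2 : (2*k+1+1)/2 = k+1 := by omega
  have h3 : (((2*k+1 : ℕ) : ℤ) + 1) / 2 = (k:ℤ)+1 := by omega
  rw [cseq, h1, h2, h3]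
  simp [hl]

lemma cseq_even_true {l : Y} {k : ℕ} (hl : l k = true) : cseq l (2*k+2) = e ((k:ℤ)+1) := by
  have h1 : (2*k+2) % 2 = 0 := by omega
  have h2 : (2*k+2+1)/2 = k+1 := by omega
  have h3 : (((2*k+2 : ℕ) : ℤ) + 1) / 2 = (k:ℤ)+1 := by omega
  rw [cseq, h1, h2, h3]
  simp [hl]

lemma cseq_even_false {l : Y} {k : ℕ} (hl : l k = false) : cseq l (2*k+2) = f ((k:ℤ)+1) := by
  have h1 : (2*k+2) % 2 = 0 := by omega
  have h2 : (2*k+2+1)/2 = k+1 := by omega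
  have h3 : (((2*k+2 : ℕ) : ℤ) + 1) / 2 = (k:ℤ)+1 := by omega
  rw [cseq, h1, h2, h3]
  simp [hl]

lemma e_mem_Hsub {l : Y} {k i : ℕ} (h : (l k = false ∧ 2*k+1 ≤ i) ∨ 2*k+2 ≤ i) :
    e ((k:ℤ)+1) ∈ Hsub l i := by
  apply AddSubgroup.subset_closure
  rcases h with ⟨hl, hi⟩ | hi
  · exact Or.inr ⟨2*k+1, ⟨by omega, hi⟩, cseq_odd_false hl⟩
  · cases hk : l k
    · exact Or.inr ⟨2*k+1, ⟨by omega, by omega⟩, cseq_odd_false hk⟩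
    · exact Or.inr ⟨2*k+2, ⟨by omega, hi⟩, cseq_even_true hk⟩

lemma e_not_mem_Hsub {l : Y} {k : ℕ} (hl : l k = true) :
    e ((k:ℤ)+1) ∉ Hsub l (2*k+1) := by
  intro hmem
  set K : AddSubgroup Vsp :=
    AddMonoidHom.ker (Finsupp.applyAddHom ((((k:ℤ)+1), false) : ℤ × Bool)) with hK
  have hle : Hsub l (2*k+1) ≤ K := by
    rw [Hsub, AddSubgroup.closure_le]
    rintro v ((⟨j, hj, rfl⟩ | ⟨j, hj, rfl⟩) | ⟨m, hm, rfl⟩)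
    · show e (-(j:ℤ)) (((k:ℤ)+1), false) = 0
      apply Finsupp.single_eq_of_ne
      simp only [ne_eq, Prod.mk.injEq, and_true]
      omega
    · show f (-(j:ℤ)) (((k:ℤ)+1), false) = 0
      apply Finsupp.single_eq_of_ne
      simp
    · show cseq l m (((k:ℤ)+1), false) = 0
      simp only [Set.mem_Icc] at hm
      by_cases hj : (m+1)/2 = k+1
      · have hm' : m = 2*k+1 := by omega
        subst hm'
        rw [cseq_odd_true hl]
        apply Finsupp.single_eq_of_ne
        simp
      · rw [cseq]
        split
        · apply Finsupp.single_eq_of_ne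
          simp only [ne_eq, Prod.mk.injEq, and_true]
          omega
        · apply Finsupp.single_eq_of_ne
          simp
  have h1 : e ((k:ℤ)+1) ∈ K := hle hmem
  have h2 : e ((k:ℤ)+1) (((k:ℤ)+1), false) = 0 := h1
  rw [e, Finsupp.single_eq_same] at h2
  exact one_ne_zero h2

lemma smul_ui_eq_zero_iff (p : ℕ → ℕ) (l : Y) (i : ℕ) (x : ZG) :
    x • ui p l i = 0 ↔
      coeffHom (p i) x ∈ grpIdeal (ZMod (p i)) (subgroupOfV (Hsub l i) : Set G) := by
  have h : x • ui p l i = (Submodule.Quotient.mk (coeffHom (p i) x) :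
      MonoidAlgebra (ZMod (p i)) G ⧸ grpIdeal (ZMod (p i)) (subgroupOfV (Hsub l i) : Set G)) := by
    show (coeffHom (p i) x) • (Submodule.Quotient.mk 1 :
      MonoidAlgebra (ZMod (p i)) G ⧸ grpIdeal (ZMod (p i)) (subgroupOfV (Hsub l i) : Set G)) = _
    rw [← Submodule.Quotient.mk_smul, smul_eq_mul, mul_one]
  rw [h]
  exact Submodule.Quotient.mk_eq_zero _

lemma mem_Jl_iff (p : ℕ → ℕ) (l : Y) (x : ZG) :
    x ∈ Jl p l ↔ ∀ i : Idx, x • ui p l i.1 = 0 := by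
  rw [Jl, LinearMap.mem_ker, LinearMap.toSpanSingleton_apply]
  constructor
  · intro h i; exact congrFun h i
  · intro h; funext i; exact h i

lemma coeffHom_zOfV (q : ℕ) (v : Vsp) :
    coeffHom q (zOfV v) = MonoidAlgebra.of (ZMod q) G (ofV v) := by
  simp [coeffHom, zOfV]

lemma key (p : ℕ → ℕ) (hp : ∀ i, 1 ≤ i → (p i).Prime)
    (hinj : ∀ i j, 1 ≤ i → 1 ≤ j → p i = p j → i = j) (l l' : Y) (k : ℕ)
    (h0 : l k = false) (h1 : l' k = true) (hJ : Jl p l = Jl p l') : False := by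
  classical
  set g : G := ofV (e ((k:ℤ)+1)) with hg
  set N : ℕ := ∏ j ∈ Finset.Icc 1 (2*k), p j with hN
  set x : ZG := (N : ZG) * (zOfV (e ((k:ℤ)+1)) - 1) with hx
  have hcoeff : ∀ q : ℕ, coeffHom q x =
      (N : MonoidAlgebra (ZMod q) G) * (MonoidAlgebra.of (ZMod q) G g - 1) := by
    intro q
    rw [hx, map_mul, map_natCast, map_sub, map_one, coeffHom_zOfV]
  have hxJ : x ∈ Jl p l := by
    rw [mem_Jl_iff]
    intro i
    rw [smul_ui_eq_zero_iff, hcoeff]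
    by_cases hi : i.1 ≤ 2*k
    · have hdvd : (p i.1) ∣ N := Finset.dvd_prod_of_mem _ (Finset.mem_Icc.mpr ⟨i.2, hi⟩)
      have hz : (N : MonoidAlgebra (ZMod (p i.1)) G) = 0 := by
        rw [MonoidAlgebra.natCast_def, (ZMod.natCast_eq_zero_iff _ _).mpr hdvd]
        exact MonoidAlgebra.single_zero _
      rw [hz, zero_mul]
      exact Ideal.zero_mem _
    · apply Ideal.mul_mem_left
      apply Ideal.subset_span
      refine ⟨g, ?_, rfl⟩
      rw [SetLike.mem_coe, hg, ofV_mem_subgroupOfV_iff]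
      rcases Nat.lt_or_ge i.1 (2*k+2) with hi2 | hi2
      · have : i.1 = 2*k+1 := by omega
        rw [this]
        exact e_mem_Hsub (Or.inl ⟨h0, le_refl _⟩)
      · exact e_mem_Hsub (Or.inr hi2)
  rw [hJ, mem_Jl_iff] at hxJ
  have hx2 := hxJ ⟨2*k+1, by omega⟩
  rw [smul_ui_eq_zero_iff, hcoeff] at hx2
  set q := p (2*k+1) with hq
  have hqp : q.Prime := hp _ (by omega)
  have hqN : ¬ q ∣ N := by
    intro hdvd
    obtain ⟨j, hj, hdj⟩ := (Prime.dvd_finset_prod_iff hqp.prime _).mp hdvd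
    rw [Finset.mem_Icc] at hj
    have hpj : (p j).Prime := hp j hj.1
    have hqj : q = p j := ((Nat.prime_dvd_prime_iff_eq hqp hpj).mp hdj)
    have := hinj (2*k+1) j (by omega) hj.1 hqj
    omega
  have hNunit : IsUnit (N : ZMod q) := by
    rw [ZMod.isUnit_iff_coprime]
    exact (Nat.coprime_comm.mp ((Nat.Prime.coprime_iff_not_dvd hqp).mpr hqN))
  obtain ⟨u, hu⟩ := hNunit
  have hmem : (MonoidAlgebra.of (ZMod q) G g - 1) ∈
      grpIdeal (ZMod q) (subgroupOfV (Hsub l' (2*k+1)) : Set G) := by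
    have h3 := Ideal.mul_mem_left _
      (MonoidAlgebra.single (1 : G) (((u⁻¹ : (ZMod q)ˣ) : ZMod q))) hx2
    rw [← mul_assoc] at h3
    have h4 : MonoidAlgebra.single (1 : G) (((u⁻¹ : (ZMod q)ˣ) : ZMod q)) *
        (N : MonoidAlgebra (ZMod q) G) = 1 := by
      rw [MonoidAlgebra.natCast_def, MonoidAlgebra.single_mul_single, mul_one, ← hu,
        ← Units.val_mul, inv_mul_cancel, Units.val_one, MonoidAlgebra.one_def]
    rw [h4, one_mul] at h3
    exact h3
  haveI : Fact q.Prime := ⟨hqp⟩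
  have hgH := (sub_one_mem_grpIdeal_iff _ _).mp hmem
  rw [hg, ofV_mem_subgroupOfV_iff] at hgH
  exact e_not_mem_Hsub h1 hgH

theorem stmt6 (p : ℕ → ℕ) (hp : ∀ i, 1 ≤ i → (p i).Prime)
    (hinj : ∀ i j, 1 ≤ i → 1 ≤ j → p i = p j → i = j) :
    Function.Injective (Jl p) := by
  intro l l' hJ
  by_contra hne
  obtain ⟨k, hk⟩ := Function.ne_iff.mp hne
  cases h : l k <;> cases h' : l' k
  · exact hk (h.trans h'.symm)
  · exact key p hp hinj l l' k h h' hJ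
  · exact key p hp hinj l' l k h' h hJ.symm
  · exact hk (h.trans h'.symm)
end
end

section
/- Let G be a group, V a subgroup of G, and (p_i)_{i≥1} an infinite sequence of pairwise distinct primes. Then ⋂_{i=1}^∞ ((V − 1)ℤG + p_i ℤG) = (V − 1)ℤG, where (V − 1)ℤG denotes the right ideal of the integral group ring ℤG generated by {v − 1 : v ∈ V}. -/
noncomputable section

namespace AugPrimes

variable {G : Type} [Group G] (V : Subgroup G)

/-- The ℤ-linear map `ℤG → ℤ[G⧸V]` induced by the quotient map. -/
def qmap : MonoidAlgebra ℤ G →ₗ[ℤ] ((G ⧸ V) →₀ ℤ) :=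
  (Finsupp.lmapDomain ℤ ℤ (QuotientGroup.mk (s := V))).comp
    (MonoidAlgebra.coeffLinearEquiv ℤ : MonoidAlgebra ℤ G ≃ₗ[ℤ] (G →₀ ℤ)).toLinearMap

lemma qmap_apply (x : MonoidAlgebra ℤ G) :
    qmap V x = Finsupp.mapDomain (QuotientGroup.mk (s := V)) x.coeff := rfl

lemma single_mul (h : G) (c : ℤ) (x : MonoidAlgebra ℤ G) :
    (MonoidAlgebra.single h c * x).coeff = c • Finsupp.mapDomain (fun g => h * g) x.coeff := by
  ext g
  rw [MonoidAlgebra.coeff_single_mul_apply]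
  have : g = (fun g => h * g) (h⁻¹ * g) := by group
  rw [Finsupp.smul_apply, this,
    Finsupp.mapDomain_apply (mul_right_injective h)]
  simp [mul_comm]

lemma qmap_mul_eq_zero (r x : MonoidAlgebra ℤ G) (hx : qmap V x = 0) :
    qmap V (r * x) = 0 := by
  induction r using MonoidAlgebra.induction_linear with
  | zero => simp [zero_mul]
  | add f g hf hg => rw [add_mul, map_add, hf, hg, add_zero]
  | single h c =>
    rw [qmap_apply, single_mul, Finsupp.mapDomain_smul, ← Finsupp.mapDomain_comp]
    have hcomp : (QuotientGroup.mk (s := V)) ∘ (fun g => h * g) =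
        (fun q : G ⧸ V => h • q) ∘ (QuotientGroup.mk (s := V)) := rfl
    rw [hcomp, Finsupp.mapDomain_comp, ← qmap_apply, hx]
    simp

/-- The augmentation-type ideal. -/
def augI : Ideal (MonoidAlgebra ℤ G) :=
  Ideal.span ((fun g : G => (MonoidAlgebra.of ℤ G g : MonoidAlgebra ℤ G) - 1) '' (V : Set G))

/-- Retraction via coset representatives. -/
def rmap : MonoidAlgebra ℤ G →ₗ[ℤ] MonoidAlgebra ℤ G :=
  (MonoidAlgebra.coeffLinearEquiv ℤ : MonoidAlgebra ℤ G ≃ₗ[ℤ] (G →₀ ℤ)).symm.toLinearMap.comp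
    ((Finsupp.lmapDomain ℤ ℤ (fun q : G ⧸ V => q.out)).comp (qmap V))

lemma qmap_single (g : G) (c : ℤ) :
    qmap V (MonoidAlgebra.single g c) = Finsupp.single (QuotientGroup.mk (s := V) g) c := by
  show Finsupp.mapDomain (QuotientGroup.mk (s := V)) (Finsupp.single g c) = _
  rw [Finsupp.mapDomain_single]

lemma sub_single_mem (g g' : G) (c : ℤ) (hv : g'⁻¹ * g ∈ V) :
    (MonoidAlgebra.single g c : MonoidAlgebra ℤ G) - MonoidAlgebra.single g' c ∈ augI V := by
  have heq : (MonoidAlgebra.single g c : MonoidAlgebra ℤ G) - MonoidAlgebra.single g' c =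
      MonoidAlgebra.single g' c *
        ((MonoidAlgebra.of ℤ G (g'⁻¹ * g) : MonoidAlgebra ℤ G) - 1) := by
    rw [mul_sub, mul_one]
    have h2 : (MonoidAlgebra.of ℤ G (g'⁻¹ * g) : MonoidAlgebra ℤ G) =
        MonoidAlgebra.single (g'⁻¹ * g) 1 := rfl
    rw [h2, MonoidAlgebra.single_mul_single]
    simp
  rw [heq]
  exact Ideal.mul_mem_left _ _ (Ideal.subset_span ⟨g'⁻¹ * g, hv, rfl⟩)

lemma mem_augI_iff (x : MonoidAlgebra ℤ G) : x ∈ augI V ↔ qmap V x = 0 := by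
  constructor
  · intro hx
    induction hx using Submodule.span_induction with
    | mem y hy =>
      obtain ⟨v, hv, rfl⟩ := hy
      have h1 : QuotientGroup.mk (s := V) v = QuotientGroup.mk (s := V) 1 :=
        QuotientGroup.eq.mpr (by simpa using hv)
      show qmap V ((MonoidAlgebra.single v 1 : MonoidAlgebra ℤ G) -
        MonoidAlgebra.single 1 1) = 0
      rw [map_sub, qmap_single, qmap_single, h1, sub_self]
    | zero => simp
    | add y z _ _ hy hz => rw [map_add, hy, hz, add_zero]
    | smul r y _ hy => rw [smul_eq_mul]; exact qmap_mul_eq_zero V r y hy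
  · intro hx
    have key : ∀ x : MonoidAlgebra ℤ G, x - rmap V x ∈ augI V := by
      intro x
      induction x using MonoidAlgebra.induction_on with
      | of g =>
        have hr : rmap V (MonoidAlgebra.of ℤ G g) =
            MonoidAlgebra.single ((QuotientGroup.mk (s := V) g).out) 1 := by
          show MonoidAlgebra.ofCoeff (Finsupp.mapDomain (fun q : G ⧸ V => q.out)
            (qmap V (MonoidAlgebra.single g 1))) = _
          rw [qmap_single, Finsupp.mapDomain_single, MonoidAlgebra.ofCoeff_single]
        rw [hr]
        have hv : ((QuotientGroup.mk (s := V) g).out)⁻¹ * g ∈ V :=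
          QuotientGroup.eq.mp (QuotientGroup.out_eq' _)
        exact sub_single_mem V g _ 1 hv
      | add f g hf hg =>
        have heq : f + g - rmap V (f + g) = (f - rmap V f) + (g - rmap V g) := by
          rw [map_add]; abel
        rw [heq]; exact add_mem hf hg
      | smul r f hf =>
        have heq : r • f - rmap V (r • f) = r • (f - rmap V f) := by
          rw [map_smul, smul_sub]
        rw [heq]
        exact zsmul_mem hf r
    have h3 := key x
    have h4 : rmap V x = 0 := by
      show MonoidAlgebra.ofCoeff (Finsupp.mapDomain (fun q : G ⧸ V => q.out) (qmap V x)) = 0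
      rw [hx, Finsupp.mapDomain_zero, MonoidAlgebra.ofCoeff_zero]
    rwa [h4, sub_zero] at h3

lemma int_eq_zero_of_forall_prime_dvd (p : ℕ → ℕ) (hp : ∀ i, (p i).Prime)
    (hinj : Function.Injective p) (a : ℤ) (ha : ∀ i, (p i : ℤ) ∣ a) : a = 0 := by
  by_contra h
  obtain ⟨m, ⟨i, rfl⟩, hlt⟩ :=
    (Set.infinite_range_of_injective hinj).exists_gt a.natAbs
  have hdvd : p i ∣ a.natAbs := Int.natAbs_dvd_natAbs.mpr (by simpa using ha i)
  have := Nat.le_of_dvd (Int.natAbs_pos.mpr h) hdvd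
  omega

end AugPrimes

open AugPrimes in
/-- Let `G` be a group, `V` a subgroup of `G`, and `(p i)` an infinite sequence of pairwise
distinct primes.  Then `⋂_{i} ((V - 1)ℤG + p_i ℤG) = (V - 1)ℤG`, where `(V - 1)ℤG` denotes
the ideal of the integral group ring `ℤG` generated by `{v - 1 : v ∈ V}` (the paper's right
ideals are mirrored by left ideals here). -/
theorem inf_aug_add_primes (G : Type) [Group G] (V : Subgroup G) (p : ℕ → ℕ)
    (hp : ∀ i, (p i).Prime) (hinj : Function.Injective p) :
    (⨅ i : ℕ,
      (Ideal.span ((fun g : G => (MonoidAlgebra.of ℤ G g : MonoidAlgebra ℤ G) - 1) ''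
          (V : Set G)) ⊔
        Ideal.span {((p i : ℤ) : MonoidAlgebra ℤ G)})) =
    Ideal.span ((fun g : G => (MonoidAlgebra.of ℤ G g : MonoidAlgebra ℤ G) - 1) ''
      (V : Set G)) := by
  refine le_antisymm ?_ (le_iInf fun i => le_sup_left)
  intro x hx
  rw [Submodule.mem_iInf] at hx
  change x ∈ augI V
  rw [mem_augI_iff]
  ext q
  apply int_eq_zero_of_forall_prime_dvd p hp hinj
  intro i
  obtain ⟨y, hy, z, hz, hxyz⟩ := Submodule.mem_sup.mp (hx i)
  obtain ⟨a, ha⟩ := Submodule.mem_span_singleton.mp hz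
  have hz' : z = (p i : ℤ) • a := by
    rw [← ha, smul_eq_mul]
    have : ((p i : ℤ) : MonoidAlgebra ℤ G) = (p i : ℤ) • (1 : MonoidAlgebra ℤ G) := by
      simp
    rw [this, mul_smul_comm, mul_one]
  have hqx : qmap V x = (p i : ℤ) • qmap V a := by
    rw [← hxyz, map_add, (mem_augI_iff V y).mp hy, zero_add, hz', map_smul]
  rw [hqx, Finsupp.smul_apply, smul_eq_mul]
  exact Dvd.intro _ rfl
end
end
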